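/- In the Rawlsian assignment, some agent receives her least preferred object with positive probability if and only if all agents have the same least preferred object. -/
import Mathlib


open Finset

/-- An n×n matrix with nonnegative real entries whose rows and columns each sum to 1. -/
def Bistochastic {n : ℕ} (x : Fin n → Fin n → ℝ) : Prop :=
  (∀ i o, 0 ≤ x i o) ∧ (∀ i, ∑ o, x i o = 1) ∧ (∀ o, ∑ i, x i o = 1)

/-- `tailProb rank x i k` = probability that agent `i` receives an object ranked `k`-th
or worse (ranks are 0-indexed: rank 0 = most preferred). -/
def tailProb {n : ℕ} (rank : Fin n → Fin n → Fin n) (x : Fin n → Fin n → ℝ)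
    (i k : Fin n) : ℝ :=
  ∑ o ∈ Finset.univ.filter (fun o => k ≤ rank i o), x i o

/-- The values of `v` rearranged in non-increasing order. -/
noncomputable def sortedDesc {n : ℕ} (v : Fin n → ℝ) : Fin n → ℝ :=
  fun j => v (Tuple.sort (fun i => -v i) j)

/-- Block `t` of `Bvec rank x` is the non-increasing rearrangement of the tail
probabilities at threshold `n-1-t`; so blocks run from the worst rank down. -/
noncomputable def Bvec {n : ℕ} (rank : Fin n → Fin n → Fin n) (x : Fin n → Fin n → ℝ) :
    Fin n → Fin n → ℝ :=
  fun t => sortedDesc (fun i => tailProb rank x i t.rev)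

/-- Lexicographic strict order on doubly-indexed vectors (outer index first). -/
def BlockLexLt {α β : Type*} [LinearOrder α] [LinearOrder β] (u v : α → β → ℝ) : Prop :=
  ∃ t s, u t s < v t s ∧ ∀ t' s', (t' < t ∨ (t' = t ∧ s' < s)) → u t' s' = v t' s'

/-- `x` Rawlsian-dominates `y`. -/
def RDom {n : ℕ} (rank : Fin n → Fin n → Fin n) (x y : Fin n → Fin n → ℝ) : Prop :=
  BlockLexLt (Bvec rank x) (Bvec rank y)

/-- A Rawlsian assignment: a bistochastic matrix not R-dominated by any other. -/
def Rawlsian {n : ℕ} (rank : Fin n → Fin n → Fin n) (x : Fin n → Fin n → ℝ) : Prop :=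
  Bistochastic x ∧ ∀ y, Bistochastic y → ¬ RDom rank y x

/-- In the Rawlsian assignment, some agent receives her least preferred object with
positive probability iff all agents share the same least preferred object. -/
lemma exists_avoiding_perm {n : ℕ} (w : Fin n → Fin n) (hw : ∃ i j : Fin n, w i ≠ w j) :
    ∃ f : Fin n → Fin n, Function.Bijective f ∧ ∀ i, f i ≠ w i := by
  classical
  obtain ⟨i0, j0, hij⟩ := hw
  have hhall : ∀ s : Finset (Fin n), s.card ≤ (s.biUnion (fun i => univ.erase (w i))).card := by
    intro s
    rcases s.eq_empty_or_nonempty with rfl | ⟨i, hi⟩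
    · simp
    by_cases hcard : s.card = n
    · have hs : s = univ := Finset.eq_univ_of_card s (by simpa using hcard)
      have hbu : s.biUnion (fun i => univ.erase (w i)) = univ := by
        apply Finset.eq_univ_of_forall
        intro o
        rcases ne_or_eq o (w i0) with h | h
        · exact Finset.mem_biUnion.2 ⟨i0, by simp [hs], Finset.mem_erase.2 ⟨h, mem_univ o⟩⟩
        · exact Finset.mem_biUnion.2 ⟨j0, by simp [hs], Finset.mem_erase.2 ⟨h ▸ hij, mem_univ o⟩⟩
      rw [hbu]
      simpa using Finset.card_le_univ s
    · have h1 : s.card ≤ n - 1 := by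
        have := Finset.card_le_univ s
        simp at this
        omega
      have hsub : univ.erase (w i) ⊆ s.biUnion (fun i => univ.erase (w i)) :=
        Finset.subset_biUnion_of_mem (fun j => univ.erase (w j)) hi
      have h2 : n - 1 ≤ (s.biUnion (fun i => univ.erase (w i))).card := by
        have := Finset.card_le_card hsub
        rwa [Finset.card_erase_of_mem (mem_univ _), Finset.card_univ, Fintype.card_fin] at this
      omega
  obtain ⟨f, hfinj, hf⟩ := (Finset.all_card_le_biUnion_card_iff_exists_injective _).1 hhall
  refine ⟨f, (Finite.injective_iff_bijective).1 hfinj, fun i => (Finset.mem_erase.1 (hf i)).1⟩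

theorem rawlsian_worst_object {n : ℕ} (hn : 0 < n) (rank : Fin n → Fin n → Fin n)
    (hrank : ∀ i, Function.Bijective (rank i))
    (x : Fin n → Fin n → ℝ) (hx : Rawlsian rank x) :
    (∃ i o, (rank i o : ℕ) = n - 1 ∧ 0 < x i o) ↔
      (∃ o, ∀ i, (rank i o : ℕ) = n - 1) := by
  classical
  obtain ⟨hxb, hxr⟩ := hx
  constructor
  · rintro ⟨i, o, hro, hpos⟩
    by_contra hno
    push_neg at hno
    set L : Fin n := ⟨n - 1, by omega⟩ with hL
    have hle : ∀ (k : Fin n), L ≤ k ↔ k = L := by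
      intro k
      constructor
      · intro h
        apply Fin.ext
        have h1 := k.isLt
        have h2 := Fin.le_def.1 h
        simp only [hL] at h2 ⊢
        omega
      · intro h; rw [h]
    have hroL : rank i o = L := Fin.ext hro
    -- each agent's worst object
    let w : Fin n → Fin n := fun a => (Equiv.ofBijective _ (hrank a)).symm L
    have hwL : ∀ a, rank a (w a) = L := fun a =>
      (Equiv.ofBijective _ (hrank a)).apply_symm_apply L
    have hwuniq : ∀ a o', rank a o' = L → o' = w a := by
      intro a o' h
      exact (hrank a).injective (h.trans (hwL a).symm)
    have hwnc : ∃ a b, w a ≠ w b := by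
      by_contra hc
      push_neg at hc
      obtain ⟨j, hj⟩ := hno (w i)
      apply hj
      have : rank j (w i) = L := by rw [hc i j]; exact hwL j
      rw [this]
    obtain ⟨f, hfbij, hfw⟩ := exists_avoiding_perm w hwnc
    let e := Equiv.ofBijective f hfbij
    set y : Fin n → Fin n → ℝ := fun a o' => if f a = o' then 1 else 0 with hy
    have hyb : Bistochastic y := by
      refine ⟨fun a o' => ?_, fun a => ?_, fun o' => ?_⟩
      · simp only [hy]; split <;> norm_num
      · simp [hy]
      · have hcong : ∀ a : Fin n, y a o' = if a = e.symm o' then (1:ℝ) else 0 := by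
          intro a
          simp only [hy]
          refine if_congr ⟨fun h => ?_, fun h => ?_⟩ rfl rfl
          · rw [← h]; exact (e.symm_apply_apply a).symm
          · rw [h]; exact e.apply_symm_apply o'
        rw [Finset.sum_congr rfl (fun a _ => hcong a)]
        simp
    have hytail : ∀ a, tailProb rank y a L = 0 := by
      intro a
      apply Finset.sum_eq_zero
      intro o' ho'
      simp only [Finset.mem_filter] at ho'
      have hoL : rank a o' = L := (hle _).1 ho'.2
      have hne : f a ≠ o' := by
        intro h
        exact hfw a (h.trans (hwuniq a o' hoL))
      simp [hy, hne]
    have hxtailnn : ∀ a k, 0 ≤ tailProb rank x a k :=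
      fun a k => Finset.sum_nonneg fun o' _ => hxb.1 a o'
    have hxtail : 0 < tailProb rank x i L := by
      have hmem : o ∈ univ.filter (fun o' => L ≤ rank i o') := by
        simp [hroL]
      exact lt_of_lt_of_le hpos (Finset.single_le_sum (fun o' _ => hxb.1 i o') hmem)
    set t₀ : Fin n := ⟨0, hn⟩ with ht₀
    have hrev : t₀.rev = L := by
      apply Fin.ext
      simp [Fin.val_rev, ht₀, hL]
    have hBx : ∀ s, Bvec rank x t₀ s
        = tailProb rank x (Tuple.sort (fun a => -(tailProb rank x a t₀.rev)) s) t₀.rev := by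
      intro s; rfl
    have hBy0 : ∀ s, Bvec rank y t₀ s = 0 := by
      intro s
      show tailProb rank y _ t₀.rev = 0
      rw [hrev]; exact hytail _
    have hBxnn : ∀ s, 0 ≤ Bvec rank x t₀ s := by
      intro s; rw [hBx]; exact hxtailnn _ _
    set S : Finset (Fin n) := univ.filter (fun s => 0 < Bvec rank x t₀ s) with hS
    have hSne : S.Nonempty := by
      refine ⟨(Tuple.sort (fun a => -(tailProb rank x a t₀.rev))).symm i, ?_⟩
      simp only [hS, Finset.mem_filter, mem_univ, true_and]
      rw [hBx, Equiv.apply_symm_apply, hrev]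
      exact hxtail
    set s₀ := S.min' hSne with hs₀
    have hs₀pos : 0 < Bvec rank x t₀ s₀ := by
      have := S.min'_mem hSne
      simp only [hS, Finset.mem_filter] at this
      exact this.2
    refine hxr y hyb ⟨t₀, s₀, ?_, ?_⟩
    · rw [hBy0]; exact hs₀pos
    · rintro t' s' (h | ⟨rfl, hs'⟩)
      · exfalso
        have := Fin.lt_def.1 h
        simp [ht₀] at this
      · have hxs' : Bvec rank x t₀ s' = 0 := by
          by_contra hne
          have hpos' : 0 < Bvec rank x t₀ s' := lt_of_le_of_ne (hBxnn s') (Ne.symm hne)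
          have : s' ∈ S := by simp [hS, hpos']
          exact absurd (S.min'_le s' this) (not_le.2 hs')
        rw [hBy0, hxs']
  · rintro ⟨o, ho⟩
    have hsum := hxb.2.2 o
    have : ∃ i, 0 < x i o := by
      by_contra h
      push_neg at h
      have : ∑ i, x i o ≤ 0 := Finset.sum_nonpos fun i _ => h i
      linarith
    obtain ⟨i, hi⟩ := this
    exact ⟨i, o, ho i, hi⟩
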